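/- Let G be a group with the unique root property. Let H1 be a subgroup of finite index in G, let H2 be a normal subgroup of finite index in G, and let φ1 : H1 → G and φ2 : H2 → G be injective homomorphisms whose images H1' = φ1(H1) and H2' = φ2(H2) have finite index in G. Suppose φ1(h) = φ2(h) for all h ∈ H1 ∩ H2. Then there exists an injective homomorphism φ : ⟨H1, H2⟩ → G with image ⟨H1', H2'⟩ such that φ(h) = φ1(h) for all h ∈ H1 and φ(h) = φ2(h) for all h ∈ H2. (Since H2 is normal, ⟨H1, H2⟩ = H1H2.) -/

import Mathlib

/-- Extension of two compatible isomorphisms between finite-index subgroups to an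
isomorphism defined on the subgroup they generate, when one of them is normal. -/
theorem stmt_4 (G : Type*) [Group G]
    (hurp : ∀ (x y : G) (n : ℕ), 0 < n → x ^ n = y ^ n → x = y)
    (H1 H2 : Subgroup G) (hH1 : H1.FiniteIndex) (hH2 : H2.FiniteIndex)
    (hnorm : H2.Normal)
    (φ1 : H1 →* G) (φ2 : H2 →* G)
    (hinj1 : Function.Injective φ1) (hinj2 : Function.Injective φ2)
    (hr1 : φ1.range.FiniteIndex) (hr2 : φ2.range.FiniteIndex)
    (hagree : ∀ (x : G) (hx1 : x ∈ H1) (hx2 : x ∈ H2), φ1 ⟨x, hx1⟩ = φ2 ⟨x, hx2⟩) :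
    ∃ φ : (H1 ⊔ H2 : Subgroup G) →* G,
      Function.Injective φ ∧
      φ.range = φ1.range ⊔ φ2.range ∧
      (∀ (x : G) (hx : x ∈ H1), φ ⟨x, Subgroup.mem_sup_left hx⟩ = φ1 ⟨x, hx⟩) ∧
      (∀ (x : G) (hx : x ∈ H2), φ ⟨x, Subgroup.mem_sup_right hx⟩ = φ2 ⟨x, hx⟩) := by
  classical
  -- every element of the sup decomposes as a product
  have key : ∀ z : G, z ∈ H1 ⊔ H2 → ∃ a, ∃ _ : a ∈ H1, ∃ b, ∃ _ : b ∈ H2, z = a * b := by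
    intro z hz
    have hz' : z ∈ (↑(H1 ⊔ H2) : Set G) := hz
    rw [Subgroup.mul_normal] at hz'
    rcases hz' with ⟨a, ha, b, hb, hab⟩
    exact ⟨a, ha, b, hb, hab.symm⟩
  choose A hA B hB hAB using key
  -- well-definedness of h1 * h2 ↦ φ1 h1 * φ2 h2
  have wd : ∀ (a1 : G) (ha1 : a1 ∈ H1) (b1 : G) (hb1 : b1 ∈ H2)
      (a2 : G) (ha2 : a2 ∈ H1) (b2 : G) (hb2 : b2 ∈ H2), a1 * b1 = a2 * b2 →
      φ1 ⟨a1, ha1⟩ * φ2 ⟨b1, hb1⟩ = φ1 ⟨a2, ha2⟩ * φ2 ⟨b2, hb2⟩ := by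
    intro a1 ha1 b1 hb1 a2 ha2 b2 hb2 h
    have hd : a2⁻¹ * a1 = b2 * b1⁻¹ := by
      have h' := congrArg (fun g => a2⁻¹ * g * b1⁻¹) h
      simp only [mul_assoc, mul_inv_cancel, mul_one, inv_mul_cancel_left] at h'
      simpa [mul_assoc] using h'
    have hm1 : a2⁻¹ * a1 ∈ H1 := mul_mem (inv_mem ha2) ha1
    have hm2 : a2⁻¹ * a1 ∈ H2 := hd ▸ mul_mem hb2 (inv_mem hb1)
    have h1 : φ1 ⟨a2⁻¹ * a1, hm1⟩ = φ2 ⟨a2⁻¹ * a1, hm2⟩ := hagree _ _ _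
    have e1 : (⟨a2⁻¹ * a1, hm1⟩ : H1) = ⟨a2, ha2⟩⁻¹ * ⟨a1, ha1⟩ := rfl
    have e2 : (⟨a2⁻¹ * a1, hm2⟩ : H2) = ⟨b2, hb2⟩ * ⟨b1, hb1⟩⁻¹ := by
      ext; exact hd
    rw [e1, e2, map_mul, map_mul, map_inv, map_inv] at h1
    calc φ1 ⟨a1, ha1⟩ * φ2 ⟨b1, hb1⟩
        = φ1 ⟨a2, ha2⟩ * ((φ1 ⟨a2, ha2⟩)⁻¹ * φ1 ⟨a1, ha1⟩) * φ2 ⟨b1, hb1⟩ := by group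
      _ = φ1 ⟨a2, ha2⟩ * (φ2 ⟨b2, hb2⟩ * (φ2 ⟨b1, hb1⟩)⁻¹) * φ2 ⟨b1, hb1⟩ := by rw [h1]
      _ = φ1 ⟨a2, ha2⟩ * φ2 ⟨b2, hb2⟩ := by group
  -- conjugation compatibility, via the unique root property
  have conj : ∀ (k : G) (hk : k ∈ H1) (h : G) (hh : h ∈ H2),
      φ2 ⟨k⁻¹ * h * k, hnorm.conj_mem' h hh k⟩
        = (φ1 ⟨k, hk⟩)⁻¹ * φ2 ⟨h, hh⟩ * φ1 ⟨k, hk⟩ := by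
    intro k hk h hh
    obtain ⟨n, hn, -, hpow⟩ := Subgroup.exists_pow_mem_of_index_ne_zero hH1.index_ne_zero h
    have hpow2 : h ^ n ∈ H2 := pow_mem hh n
    have hc1 : k⁻¹ * h ^ n * k ∈ H1 := mul_mem (mul_mem (inv_mem hk) hpow) hk
    have hc2 : k⁻¹ * h ^ n * k ∈ H2 := hnorm.conj_mem' _ hpow2 k
    have hcpow : (k⁻¹ * h * k) ^ n = k⁻¹ * h ^ n * k := by
      have := conj_pow (i := n) (a := k⁻¹) (b := h)
      simpa using this
    have step1 : (φ2 ⟨k⁻¹ * h * k, hnorm.conj_mem' h hh k⟩) ^ n = φ2 ⟨k⁻¹ * h ^ n * k, hc2⟩ := by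
      rw [← map_pow]
      congr 1
      ext
      exact hcpow
    have step2 : φ2 ⟨k⁻¹ * h ^ n * k, hc2⟩ = φ1 ⟨k⁻¹ * h ^ n * k, hc1⟩ := (hagree _ _ _).symm
    have e1 : (⟨k⁻¹ * h ^ n * k, hc1⟩ : H1) = ⟨k, hk⟩⁻¹ * ⟨h ^ n, hpow⟩ * ⟨k, hk⟩ := rfl
    have step3 : φ1 ⟨k⁻¹ * h ^ n * k, hc1⟩
        = (φ1 ⟨k, hk⟩)⁻¹ * φ1 ⟨h ^ n, hpow⟩ * φ1 ⟨k, hk⟩ := by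
      rw [e1, map_mul, map_mul, map_inv]
    have step4 : φ1 ⟨h ^ n, hpow⟩ = (φ2 ⟨h, hh⟩) ^ n := by
      have : φ1 ⟨h ^ n, hpow⟩ = φ2 ⟨h ^ n, hpow2⟩ := hagree _ _ _
      rw [this]
      have e2 : (⟨h ^ n, hpow2⟩ : H2) = ⟨h, hh⟩ ^ n := by ext; simp
      rw [e2, map_pow]
    refine hurp _ _ n hn ?_
    rw [step1, step2, step3, step4]
    have := conj_pow (i := n) (a := (φ1 ⟨k, hk⟩)⁻¹) (b := φ2 ⟨h, hh⟩)
    simpa using this.symm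
  -- define the candidate homomorphism
  set f : (H1 ⊔ H2 : Subgroup G) → G :=
    fun z => φ1 ⟨A z.1 z.2, hA z.1 z.2⟩ * φ2 ⟨B z.1 z.2, hB z.1 z.2⟩ with hf
  have fval : ∀ (z : (H1 ⊔ H2 : Subgroup G)) (a : G) (ha : a ∈ H1) (b : G) (hb : b ∈ H2),
      (z : G) = a * b → f z = φ1 ⟨a, ha⟩ * φ2 ⟨b, hb⟩ := by
    intro z a ha b hb hz
    exact wd _ _ _ _ _ _ _ _ ((hAB z.1 z.2).symm.trans hz)
  have fmul : ∀ z w : (H1 ⊔ H2 : Subgroup G), f (z * w) = f z * f w := by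
    intro z w
    set az := A z.1 z.2 with haz
    set bz := B z.1 z.2 with hbz
    set aw := A w.1 w.2 with haw
    set bw := B w.1 w.2 with hbw
    have ha : az * aw ∈ H1 := mul_mem (hA z.1 z.2) (hA w.1 w.2)
    have hbzc : aw⁻¹ * bz * aw ∈ H2 := hnorm.conj_mem' _ (hB z.1 z.2) aw
    have hb : (aw⁻¹ * bz * aw) * bw ∈ H2 := mul_mem hbzc (hB w.1 w.2)
    have hdec : ((z * w : (H1 ⊔ H2 : Subgroup G)) : G) = (az * aw) * ((aw⁻¹ * bz * aw) * bw) := by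
      push_cast
      rw [hAB z.1 z.2, hAB w.1 w.2]
      group
      rfl
    rw [fval (z * w) _ ha _ hb hdec]
    rw [fval z az (hA z.1 z.2) bz (hB z.1 z.2) (hAB z.1 z.2),
        fval w aw (hA w.1 w.2) bw (hB w.1 w.2) (hAB w.1 w.2)]
    have e1 : (⟨az * aw, ha⟩ : H1) = ⟨az, hA z.1 z.2⟩ * ⟨aw, hA w.1 w.2⟩ := rfl
    have e2 : (⟨(aw⁻¹ * bz * aw) * bw, hb⟩ : H2) = ⟨aw⁻¹ * bz * aw, hbzc⟩ * ⟨bw, hB w.1 w.2⟩ := rfl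
    rw [e1, e2, map_mul, map_mul, conj (aw) (hA w.1 w.2) bz (hB z.1 z.2)]
    group
  have o1 : ∀ h : (1 : G) ∈ H1, φ1 ⟨1, h⟩ = 1 := fun _ => map_one φ1
  have o2 : ∀ h : (1 : G) ∈ H2, φ2 ⟨1, h⟩ = 1 := fun _ => map_one φ2
  have fone : f 1 = 1 := by
    rw [fval 1 1 (one_mem _) 1 (one_mem _) (by simp), o1, o2, mul_one]
  refine ⟨{ toFun := f, map_one' := fone, map_mul' := fmul }, ?_, ?_, ?_, ?_⟩
  · -- injectivity
    rw [injective_iff_map_eq_one]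
    intro z hz
    simp only [MonoidHom.coe_mk, OneHom.coe_mk] at hz
    have ha := hA z.1 z.2
    have hb := hB z.1 z.2
    have hz' : φ1 ⟨A z.1 z.2, ha⟩ * φ2 ⟨B z.1 z.2, hb⟩ = 1 := hz
    obtain ⟨n, hn, -, hpow⟩ :=
      Subgroup.exists_pow_mem_of_index_ne_zero hH2.index_ne_zero (A z.1 z.2)
    have hpow1 : A z.1 z.2 ^ n ∈ H1 := pow_mem ha n
    have e1 : (φ1 ⟨A z.1 z.2, ha⟩) ^ n = φ2 ⟨A z.1 z.2 ^ n, hpow⟩ := by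
      rw [← map_pow]
      have : (⟨A z.1 z.2, ha⟩ : H1) ^ n = ⟨A z.1 z.2 ^ n, hpow1⟩ := by ext; simp
      rw [this]
      exact hagree _ _ _
    have e2 : φ1 ⟨A z.1 z.2, ha⟩ = (φ2 ⟨B z.1 z.2, hb⟩)⁻¹ := by
      rwa [mul_eq_one_iff_eq_inv] at hz'
    have e3 : φ2 ⟨A z.1 z.2 ^ n, hpow⟩ = φ2 ((⟨B z.1 z.2, hb⟩)⁻¹ ^ n) := by
      rw [← e1, e2, map_pow, map_inv]
    have e4 : A z.1 z.2 ^ n = (B z.1 z.2)⁻¹ ^ n := by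
      have h5 := congrArg Subtype.val (hinj2 e3)
      simpa using h5
    have e5 : A z.1 z.2 = (B z.1 z.2)⁻¹ := hurp _ _ n hn e4
    have hz1 : (z : G) = 1 := by
      rw [hAB z.1 z.2, e5, inv_mul_cancel]
    ext
    simpa using hz1
  · -- range
    apply le_antisymm
    · rintro g ⟨z, rfl⟩
      simp only [MonoidHom.coe_mk, OneHom.coe_mk]
      exact mul_mem (Subgroup.mem_sup_left ⟨_, rfl⟩) (Subgroup.mem_sup_right ⟨_, rfl⟩)
    · rw [sup_le_iff]
      constructor
      · rintro g ⟨x, rfl⟩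
        refine ⟨⟨(x : G), Subgroup.mem_sup_left x.2⟩, ?_⟩
        show f _ = _
        rw [fval _ (x : G) x.2 1 (one_mem _) (by simp), o2, mul_one]
      · rintro g ⟨x, rfl⟩
        refine ⟨⟨(x : G), Subgroup.mem_sup_right x.2⟩, ?_⟩
        show f _ = _
        rw [fval _ 1 (one_mem _) (x : G) x.2 (by simp), o1, one_mul]
  · intro x hx
    show f _ = _
    rw [fval _ x hx 1 (one_mem _) (by simp), o2, mul_one]
  · intro x hx
    show f _ = _
    rw [fval _ 1 (one_mem _) x hx (by simp), o1, one_mul]
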